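/- Let T = (S, Σ, κ) be a stochastic transition system and B, A ∈ Σ. If there exist k ∈ ℕ and p > 0 such that for every ν ∈ Dist(A), Prob_ν(F^{≤k} B) ≥ p, then for every initial probability distribution μ on (S, Σ), Prob_μ(G (S ∖ B) ∩ GF A) = 0. -/

import Mathlib

open MeasureTheory ProbabilityTheory Filter Set ENNReal

namespace STS

variable {S : Type*} [MeasurableSpace S]

/-- The finite-dimensional distributions of the Markov chain with initial distribution `μ`
and transition kernel `κ`: `finDist κ μ n` is the joint law of the first `n+1` states. -/
noncomputable def finDist (κ : Kernel S S) (μ : Measure S) : (n : ℕ) → Measure (Fin (n + 1) → S)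
  | 0 => μ.map (fun s => fun _ => s)
  | n + 1 => (finDist κ μ n).bind (fun x => (κ (x (Fin.last n))).map (Fin.snoc x))

/-- `P` assigns to each initial probability distribution `μ` the probability measure `Prob_μ`
on the space of runs `ℕ → S` (given by the Ionescu–Tulcea theorem), i.e. the unique probability
measure under which the coordinate process is a Markov chain with initial distribution `μ` and
transition kernel `κ`.  This is characterized by the finite-dimensional distributions. -/
def IsMarkovMeasureFamily (κ : Kernel S S) (P : Measure S → Measure (ℕ → S)) : Prop :=
  ∀ μ : Measure S, IsProbabilityMeasure μ →
    IsProbabilityMeasure (P μ) ∧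
    ∀ n : ℕ, (P μ).map (fun ω (i : Fin (n + 1)) => ω i.1) = finDist κ μ n

/-- `F B`: the set of runs that visit `B` at some point. -/
def FEv (B : Set S) : Set (ℕ → S) := {ω | ∃ k, ω k ∈ B}

/-- `F^{≤n} B`: the set of runs that visit `B` within `n` steps. -/
def FLe (n : ℕ) (B : Set S) : Set (ℕ → S) := {ω | ∃ k ≤ n, ω k ∈ B}

/-- `B' U B`: runs that stay in `B'` until a first visit to `B`. -/
def Until (B' B : Set S) : Set (ℕ → S) := {ω | ∃ k, ω k ∈ B ∧ ∀ j < k, ω j ∈ B'}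

/-- `B' U^{≤n} B`: runs that stay in `B'` until a first visit to `B`, within `n` steps. -/
def UntilLe (n : ℕ) (B' B : Set S) : Set (ℕ → S) :=
  {ω | ∃ k ≤ n, ω k ∈ B ∧ ∀ j < k, ω j ∈ B'}

/-- `G B`: runs that always stay in `B`. -/
def Glob (B : Set S) : Set (ℕ → S) := {ω | ∀ k, ω k ∈ B}

/-- `GF B`: runs that visit `B` infinitely often. -/
def GlobFEv (B : Set S) : Set (ℕ → S) := {ω | ∀ n : ℕ, ∃ k ≥ n, ω k ∈ B}

/-- The avoid-set `B̃` of `B`: states from which `B` is reached with probability `0`. -/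
def avoidSet (P : Measure S → Measure (ℕ → S)) (B : Set S) : Set S :=
  {s : S | P (Measure.dirac s) (FEv B) = 0}

/-- The STS is decisive w.r.t. `B`: from any initial distribution, almost surely either `B` or
its avoid-set `B̃` is eventually visited. -/
def Decisive (P : Measure S → Measure (ℕ → S)) (B : Set S) : Prop :=
  ∀ μ : Measure S, IsProbabilityMeasure μ → P μ (FEv B ∪ FEv (avoidSet P B)) = 1

/-- `A` is an attractor: it is reached almost surely from any initial distribution. -/
def IsAttractor (P : Measure S → Measure (ℕ → S)) (A : Set S) : Prop :=
  ∀ μ : Measure S, IsProbabilityMeasure μ → P μ (FEv A) = 1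

section Aux
set_option linter.unusedSectionVars false

lemma snoc_eq_of_lt {n : ℕ} (x : Fin (n + 1) → S) (s : S) (j : Fin (n + 2)) (h : j.1 < n + 1) :
    (Fin.snoc x s : Fin (n + 2) → S) j = x ⟨j.1, h⟩ := by
  have hj : j = Fin.castSucc ⟨j.1, h⟩ := by ext; rfl
  have h2 : (Fin.snoc x s : Fin (n + 2) → S) (Fin.castSucc ⟨j.1, h⟩) = x ⟨j.1, h⟩ :=
    Fin.snoc_castSucc ..
  rw [← hj] at h2
  exact h2

lemma measurable_snoc2 (n : ℕ) :
    Measurable (fun q : (Fin (n + 1) → S) × S => (Fin.snoc q.1 q.2 : Fin (n + 2) → S)) := by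
  apply measurable_pi_lambda
  intro i
  rcases lt_or_eq_of_le (Nat.lt_succ_iff.mp i.isLt) with h | h
  · have h1 : ∀ q : (Fin (n + 1) → S) × S, (Fin.snoc q.1 q.2 : Fin (n + 2) → S) i = q.1 ⟨i.1, h⟩ :=
      fun q => snoc_eq_of_lt _ _ _ h
    simp only [h1]
    exact (measurable_pi_apply _).comp measurable_fst
  · have hi : i = Fin.last (n + 1) := by ext; exact h
    subst hi
    simp only [Fin.snoc_last]
    exact measurable_snd

lemma measurable_snoc_right {n : ℕ} (x : Fin (n + 1) → S) :
    Measurable (fun s : S => (Fin.snoc x s : Fin (n + 2) → S)) :=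
  (measurable_snoc2 n).comp (measurable_const.prodMk measurable_id)

variable (κ : Kernel S S) [IsMarkovKernel κ]

lemma measurable_finDistStep (n : ℕ) :
    Measurable (fun x : Fin (n + 1) → S => ((κ (x (Fin.last n))).map (Fin.snoc x) : Measure (Fin (n + 2) → S))) := by
  apply Measure.measurable_of_measurable_coe
  intro s hs
  have h1 : ∀ x : Fin (n + 1) → S, (κ (x (Fin.last n))).map (Fin.snoc x) s
      = κ (x (Fin.last n)) (Prod.mk x ⁻¹' {q : (Fin (n + 1) → S) × S | Fin.snoc q.1 q.2 ∈ s}) := by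
    intro x
    rw [Measure.map_apply (measurable_snoc_right x) hs]
    rfl
  simp only [h1]
  have ht : MeasurableSet {q : (Fin (n + 1) → S) × S | Fin.snoc q.1 q.2 ∈ s} :=
    (measurable_snoc2 n) hs
  exact Kernel.measurable_kernel_prodMk_left (κ := κ.comap (fun x : Fin (n + 1) → S => x (Fin.last n)) (measurable_pi_apply _)) ht

lemma finDist_prob (μ : Measure S) (hμ : IsProbabilityMeasure μ) (n : ℕ) :
    IsProbabilityMeasure (finDist κ μ n) := by
  induction n with
  | zero =>
    exact Measure.isProbabilityMeasure_map (Measurable.aemeasurable (measurable_pi_lambda _ fun _ => measurable_id))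
  | succ n ih =>
    constructor
    rw [finDist, Measure.bind_apply MeasurableSet.univ (measurable_finDistStep κ n).aemeasurable]
    have h1 : ∀ x : Fin (n + 1) → S, ((κ (x (Fin.last n))).map (Fin.snoc x) : Measure (Fin (n + 2) → S)) univ = 1 := by
      intro x
      have : IsProbabilityMeasure ((κ (x (Fin.last n))).map (Fin.snoc x) : Measure (Fin (n + 2) → S)) :=
        Measure.isProbabilityMeasure_map (measurable_snoc_right x).aemeasurable
      exact this.measure_univ
    simp only [h1, lintegral_one]
    exact ih.measure_univ

lemma finDist_lintegral_step (μ : Measure S) (n : ℕ) (G : (Fin (n + 2) → S) → ℝ≥0∞)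
    (hG : Measurable G) :
    ∫⁻ y, G y ∂(finDist κ μ (n + 1))
      = ∫⁻ x, ∫⁻ s, G (Fin.snoc x s) ∂(κ (x (Fin.last n))) ∂(finDist κ μ n) := by
  rw [finDist, Measure.lintegral_bind (measurable_finDistStep κ n).aemeasurable hG.aemeasurable]
  congr 1
  funext x
  rw [lintegral_map hG (measurable_snoc_right x)]


/-- first `t+1` coordinates -/
def front (t n : ℕ) : (Fin (t + n + 1) → S) → (Fin (t + 1) → S) :=
  fun x i => x (Fin.castLE (by omega) i)

/-- coordinates from `t` on -/
def tail (t n : ℕ) : (Fin (t + n + 1) → S) → (Fin (n + 1) → S) :=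
  fun x j => x ⟨t + j.1, by omega⟩

lemma measurable_front (t n : ℕ) : Measurable (front (S := S) t n) :=
  measurable_pi_lambda _ fun _ => measurable_pi_apply _

lemma measurable_tail (t n : ℕ) : Measurable (tail (S := S) t n) :=
  measurable_pi_lambda _ fun _ => measurable_pi_apply _

lemma front_snoc (t n : ℕ) (x : Fin (t + n + 1) → S) (s : S) :
    front t (n + 1) (Fin.snoc x s) = front t n x := by
  funext i
  exact snoc_eq_of_lt x s _ (by simp only [Fin.coe_castLE]; omega)

lemma tail_snoc (t n : ℕ) (x : Fin (t + n + 1) → S) (s : S) :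
    tail t (n + 1) (Fin.snoc x s) = Fin.snoc (tail t n x) s := by
  funext j
  rcases lt_or_eq_of_le (Nat.lt_succ_iff.mp j.isLt) with h | h
  · rw [show (Fin.snoc (tail t n x) s : Fin (n + 2) → S) j = tail t n x ⟨j.1, h⟩ from
      snoc_eq_of_lt _ _ _ h]
    exact snoc_eq_of_lt x s _ (by show t + j.1 < t + n + 1; omega)
  · have hj : j = Fin.last (n + 1) := by ext; exact h
    subst hj
    rw [Fin.snoc_last]
    show (Fin.snoc x s : Fin (t + n + 2) → S) ⟨t + (n + 1), by omega⟩ = s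
    have : (⟨t + (n + 1), by omega⟩ : Fin (t + n + 2)) = Fin.last (t + n + 1) := by
      ext; simp; omega
    rw [this, Fin.snoc_last]

lemma tail_last (t n : ℕ) (x : Fin (t + n + 1) → S) :
    tail t n x (Fin.last n) = x (Fin.last (t + n)) := by
  show x ⟨t + n, _⟩ = x (Fin.last (t + n)); rfl

/-- Markov factorization for `finDist`. -/
lemma finDist_factor (μ : Measure S) (t : ℕ) :
    ∀ (n : ℕ) (f : (Fin (t + 1) → S) → ℝ≥0∞) (_ : Measurable f)
      (G : (Fin (n + 1) → S) → ℝ≥0∞) (_ : Measurable G),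
    ∫⁻ x, f (front t n x) * G (tail t n x) ∂(finDist κ μ (t + n))
      = ∫⁻ y, f y * ∫⁻ z, G z ∂(finDist κ (Measure.dirac (y (Fin.last t))) n)
          ∂(finDist κ μ t) := by
  intro n
  induction n with
  | zero =>
    intro f hf G hG
    refine lintegral_congr fun x => ?_
    have h2 : (∫⁻ z, G z ∂(finDist κ (Measure.dirac (x (Fin.last t))) 0))
        = G (tail t 0 x) := by
      have hm2 : Measurable fun s : S => G (fun _ => s) :=
        hG.comp (measurable_pi_lambda _ fun _ => measurable_id)
      have e1 : (∫⁻ z, G z ∂(finDist κ (Measure.dirac (x (Fin.last t))) 0))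
          = ∫⁻ s, G (fun _ => s) ∂(Measure.dirac (x (Fin.last t))) :=
        lintegral_map hG (measurable_pi_lambda _ fun _ => measurable_id)
      rw [e1, lintegral_dirac' _ hm2]
      congr 1
      funext j
      show x (Fin.last t) = x ⟨t + j.1, _⟩
      congr 1
      ext
      simp only [Fin.val_last]
      omega
    rw [h2]
    rfl
  | succ n ih =>
    intro f hf G hG
    have key := finDist_lintegral_step κ μ (t + n)
      (fun w => f (front t (n + 1) w) * G (tail t (n + 1) w))
      ((hf.comp (measurable_front t (n + 1))).mul (hG.comp (measurable_tail t (n + 1))))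
    refine Eq.trans key ?_
    have hG' : Measurable (fun z : Fin (n + 1) → S =>
        ∫⁻ s, G (Fin.snoc z s) ∂(κ (z (Fin.last n)))) := by
      have : Measurable (Function.uncurry fun (z : Fin (n + 1) → S) (s : S) =>
          G (Fin.snoc z s)) := hG.comp (measurable_snoc2 n)
      exact this.lintegral_kernel_prod_right
        (κ := κ.comap (fun z : Fin (n + 1) → S => z (Fin.last n)) (measurable_pi_apply _))
    have step1 : ∀ x : Fin (t + n + 1) → S,
        (∫⁻ s, f (front t (n + 1) (Fin.snoc x s)) * G (tail t (n + 1) (Fin.snoc x s))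
            ∂(κ (x (Fin.last (t + n)))))
        = f (front t n x) * (fun z : Fin (n + 1) → S =>
            ∫⁻ s, G (Fin.snoc z s) ∂(κ (z (Fin.last n)))) (tail t n x) := by
      intro x
      simp only [front_snoc, tail_snoc, tail_last]
      have hm : Measurable fun s : S => G (Fin.snoc (tail t n x) s) :=
        hG.comp (measurable_snoc_right _)
      rw [lintegral_const_mul _ hm]
    refine Eq.trans (lintegral_congr step1) ?_
    refine Eq.trans (ih f hf (fun z : Fin (n + 1) → S =>
      ∫⁻ s, G (Fin.snoc z s) ∂(κ (z (Fin.last n)))) hG') ?_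
    refine lintegral_congr fun y => ?_
    congr 1
    exact (finDist_lintegral_step κ (Measure.dirac (y (Fin.last t))) n G hG).symm


end Aux

section Aux2
set_option linter.unusedSectionVars false
variable (κ : Kernel S S) [IsMarkovKernel κ]

lemma measurable_restrMap (n : ℕ) :
    Measurable (fun ω : ℕ → S => (fun i : Fin (n + 1) => ω i.1)) :=
  measurable_pi_lambda _ fun _ => measurable_pi_apply _

lemma P_cyl (P : Measure S → Measure (ℕ → S)) (hP : IsMarkovMeasureFamily κ P)
    (μ : Measure S) (hμ : IsProbabilityMeasure μ) (n : ℕ) (C : Set (Fin (n + 1) → S))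
    (hC : MeasurableSet C) :
    P μ ((fun ω (i : Fin (n + 1)) => ω i.1) ⁻¹' C) = finDist κ μ n C := by
  rw [← (hP μ hμ).2 n, Measure.map_apply (measurable_restrMap n) hC]

def HitF (B : Set S) (n : ℕ) : Set (Fin (n + 1) → S) := {z | ∃ i, z i ∈ B}

lemma measurable_HitF (B : Set S) (hB : MeasurableSet B) (n : ℕ) :
    MeasurableSet (HitF B n) := by
  have h : HitF B n = ⋃ i : Fin (n + 1), (fun z : Fin (n + 1) → S => z i) ⁻¹' B := by
    ext z; simp [HitF]
  rw [h]
  exact MeasurableSet.iUnion fun i => (measurable_pi_apply i) hB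

lemma FLe_eq (B : Set S) (n : ℕ) :
    FLe n B = (fun ω (i : Fin (n + 1)) => ω i.1) ⁻¹' HitF B n := by
  ext ω
  constructor
  · rintro ⟨j, hj, h⟩
    exact ⟨⟨j, by omega⟩, h⟩
  · rintro ⟨i, h⟩
    exact ⟨i.1, by omega, h⟩

lemma dirac_bound (P : Measure S → Measure (ℕ → S)) (hP : IsMarkovMeasureFamily κ P)
    (B A : Set S) (hB : MeasurableSet B)
    (k : ℕ) (p : ℝ≥0∞)
    (hreach : ∀ ν : Measure S, IsProbabilityMeasure ν → ν A = 1 → p ≤ P ν (FLe k B))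
    (s : S) (hs : s ∈ A) :
    finDist κ (Measure.dirac s) k (HitF B k)ᶜ ≤ 1 - p := by
  have hprob : IsProbabilityMeasure (finDist κ (Measure.dirac s) k) :=
    finDist_prob κ _ inferInstance k
  have h1 : p ≤ finDist κ (Measure.dirac s) k (HitF B k) := by
    have h2 := hreach (Measure.dirac s) inferInstance (Measure.dirac_apply_of_mem hs)
    rwa [FLe_eq, P_cyl κ P hP _ inferInstance k _ (measurable_HitF B hB k)] at h2
  rw [prob_compl_eq_one_sub (measurable_HitF B hB k)]
  exact tsub_le_tsub_left h1 1

lemma markov_step (P : Measure S → Measure (ℕ → S)) (hP : IsMarkovMeasureFamily κ P)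
    (B A : Set S) (hB : MeasurableSet B)
    (k : ℕ) (p : ℝ≥0∞)
    (hreach : ∀ ν : Measure S, IsProbabilityMeasure ν → ν A = 1 → p ≤ P ν (FLe k B))
    (μ : Measure S) (hμ : IsProbabilityMeasure μ)
    (t : ℕ) (C : Set (Fin (t + 1) → S)) (hC : MeasurableSet C)
    (hCA : ∀ y ∈ C, y (Fin.last t) ∈ A) :
    P μ ((fun ω (i : Fin (t + 1)) => ω i.1) ⁻¹' C ∩ {ω | ∀ j ≤ k, ω (t + j) ∉ B})
      ≤ (1 - p) * P μ ((fun ω (i : Fin (t + 1)) => ω i.1) ⁻¹' C) := by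
  set N := (HitF B k)ᶜ with hN
  have hNm : MeasurableSet N := (measurable_HitF B hB k).compl
  set C' : Set (Fin (t + k + 1) → S) := front t k ⁻¹' C ∩ tail t k ⁻¹' N with hC'
  have hC'm : MeasurableSet C' := ((measurable_front t k) hC).inter ((measurable_tail t k) hNm)
  have e0 : (fun (ω : ℕ → S) (i : Fin (t + k + 1)) => ω i.1) ⁻¹' C'
      = (fun (ω : ℕ → S) (i : Fin (t + 1)) => ω i.1) ⁻¹' C
        ∩ {ω : ℕ → S | ∀ j ≤ k, ω (t + j) ∉ B} := by
    ext ω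
    simp only [hC', mem_inter_iff, mem_preimage, mem_setOf_eq]
    constructor
    · rintro ⟨h1, h2⟩
      refine ⟨h1, fun j hj hjB => h2 ⟨⟨j, by omega⟩, hjB⟩⟩
    · rintro ⟨h1, h2⟩
      exact ⟨h1, fun hi => h2 hi.choose.1 (by omega) hi.choose_spec⟩
  have hfm : Measurable (C.indicator (fun _ => (1 : ℝ≥0∞))) := measurable_const.indicator hC
  have hGm : Measurable (N.indicator (fun _ => (1 : ℝ≥0∞))) := measurable_const.indicator hNm
  have ind_eq : ∀ x : Fin (t + k + 1) → S,
      C.indicator (fun _ => (1 : ℝ≥0∞)) (front t k x) * N.indicator (fun _ => 1) (tail t k x)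
        = C'.indicator (fun _ => 1) x := by
    intro x
    by_cases h1 : front t k x ∈ C <;> by_cases h2 : tail t k x ∈ N <;>
      simp [hC', indicator, h1, h2]
  have e1 : (∫⁻ x, C.indicator (fun _ => (1 : ℝ≥0∞)) (front t k x)
        * N.indicator (fun _ => 1) (tail t k x) ∂(finDist κ μ (t + k)))
      = finDist κ μ (t + k) C' := by
    rw [lintegral_congr ind_eq, lintegral_indicator hC'm, setLIntegral_one]
  have e3 : ∀ y : Fin (t + 1) → S,
      C.indicator (fun _ => (1 : ℝ≥0∞)) y
        * (∫⁻ z, N.indicator (fun _ => 1) z ∂(finDist κ (Measure.dirac (y (Fin.last t))) k))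
      ≤ C.indicator (fun _ => 1) y * (1 - p) := by
    intro y
    by_cases hy : y ∈ C
    · simp only [indicator_of_mem hy]
      rw [one_mul, one_mul]
      have h4 : (∫⁻ z, N.indicator (fun _ => (1 : ℝ≥0∞)) z
          ∂(finDist κ (Measure.dirac (y (Fin.last t))) k))
          = finDist κ (Measure.dirac (y (Fin.last t))) k N := by
        rw [lintegral_indicator hNm, setLIntegral_one]
      rw [h4]
      exact dirac_bound κ P hP B A hB k p hreach _ (hCA y hy)
    · simp [indicator_of_notMem hy]
  rw [← e0, P_cyl κ P hP μ hμ (t + k) C' hC'm]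
  calc finDist κ μ (t + k) C'
      = ∫⁻ x, C.indicator (fun _ => (1 : ℝ≥0∞)) (front t k x)
          * N.indicator (fun _ => 1) (tail t k x) ∂(finDist κ μ (t + k)) := e1.symm
    _ = ∫⁻ y, C.indicator (fun _ => 1) y
          * ∫⁻ z, N.indicator (fun _ => 1) z ∂(finDist κ (Measure.dirac (y (Fin.last t))) k)
          ∂(finDist κ μ t) :=
        finDist_factor κ μ t k (C.indicator fun _ => 1) hfm (N.indicator fun _ => 1) hGm
    _ ≤ ∫⁻ y, C.indicator (fun _ => 1) y * (1 - p) ∂(finDist κ μ t) := lintegral_mono e3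
    _ = (finDist κ μ t C) * (1 - p) := by
        rw [lintegral_mul_const _ hfm, lintegral_indicator hC, setLIntegral_one]
    _ = (1 - p) * finDist κ μ t C := mul_comm _ _
    _ = (1 - p) * P μ ((fun ω (i : Fin (t + 1)) => ω i.1) ⁻¹' C) := by
        rw [P_cyl κ P hP μ hμ t C hC]

end Aux2

section Aux3
set_option linter.unusedSectionVars false

variable (A : Set S) (k : ℕ)

/-- `GV A k m t ω`: `t` is the `(m+1)`-st greedy spaced visit time to `A` along `ω`. -/
def GV : ℕ → ℕ → (ℕ → S) → Prop
  | 0, t, ω => ω t ∈ A ∧ ∀ j < t, ω j ∉ A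
  | m + 1, t, ω => ∃ t', GV m t' ω ∧ t' + k < t ∧ ω t ∈ A ∧
      ∀ j, t' + k < j → j < t → ω j ∉ A

lemma GV_mem : ∀ m t (ω : ℕ → S), GV A k m t ω → ω t ∈ A
  | 0, _, _, h => h.1
  | _ + 1, _, _, h => h.choose_spec.2.2.1

lemma GV_unique : ∀ m t₁ t₂ (ω : ℕ → S), GV A k m t₁ ω → GV A k m t₂ ω → t₁ = t₂ := by
  intro m
  induction m with
  | zero =>
    intro t₁ t₂ ω h1 h2
    rcases Nat.lt_trichotomy t₁ t₂ with h | h | h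
    · exact absurd h1.1 (h2.2 t₁ h)
    · exact h
    · exact absurd h2.1 (h1.2 t₂ h)
  | succ m ih =>
    intro t₁ t₂ ω h1 h2
    obtain ⟨s₁, hs₁, hlt₁, hA₁, hmin₁⟩ := h1
    obtain ⟨s₂, hs₂, hlt₂, hA₂, hmin₂⟩ := h2
    have hs : s₁ = s₂ := ih s₁ s₂ ω hs₁ hs₂
    subst hs
    rcases Nat.lt_trichotomy t₁ t₂ with h | h | h
    · exact absurd hA₁ (hmin₂ t₁ hlt₁ h)
    · exact h
    · exact absurd hA₂ (hmin₁ t₂ hlt₂ h)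

lemma GV_congr : ∀ m t (ω ω' : ℕ → S), (∀ j ≤ t, ω j = ω' j) →
    GV A k m t ω → GV A k m t ω' := by
  intro m
  induction m with
  | zero =>
    intro t ω ω' hag h
    refine ⟨hag t le_rfl ▸ h.1, fun j hj hA' => h.2 j hj ?_⟩
    rw [hag j (Nat.le_of_lt hj)]; exact hA'
  | succ m ih =>
    intro t ω ω' hag h
    obtain ⟨t', ht', hlt, hA1, hmin⟩ := h
    refine ⟨t', ih t' ω ω' (fun j hj => hag j (by omega)) ht', hlt, ?_, ?_⟩
    · rw [← hag t le_rfl]; exact hA1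
    · intro j h1 h2 hA'
      refine hmin j h1 h2 ?_
      rw [hag j (by omega)]; exact hA'

lemma GV_measurable (hA : MeasurableSet A) : ∀ m t, MeasurableSet {ω : ℕ → S | GV A k m t ω} := by
  intro m
  induction m with
  | zero =>
    intro t
    have h : {ω : ℕ → S | GV A k 0 t ω}
        = (fun ω : ℕ → S => ω t) ⁻¹' A
          ∩ ⋂ (j : ℕ), ⋂ (_ : j < t), (fun ω : ℕ → S => ω j) ⁻¹' Aᶜ := by
      ext ω
      simp only [GV, mem_setOf_eq, mem_inter_iff, mem_preimage, mem_iInter, mem_compl_iff]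
    rw [h]
    exact ((measurable_pi_apply t) hA).inter
      (MeasurableSet.iInter fun j => MeasurableSet.iInter fun _ =>
        (measurable_pi_apply j) hA.compl)
  | succ m ih =>
    intro t
    have h : {ω : ℕ → S | GV A k (m + 1) t ω}
        = ⋃ t' : ℕ, ({ω : ℕ → S | GV A k m t' ω} ∩ {ω : ℕ → S | t' + k < t}
            ∩ (fun ω : ℕ → S => ω t) ⁻¹' A
            ∩ ⋂ (j : ℕ), ⋂ (_ : t' + k < j), ⋂ (_ : j < t),
                (fun ω : ℕ → S => ω j) ⁻¹' Aᶜ) := by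
      ext ω
      simp only [GV, mem_setOf_eq, mem_iUnion, mem_inter_iff, mem_preimage, mem_iInter,
        mem_compl_iff]
      constructor
      · rintro ⟨t', h1, h2, h3, h4⟩
        exact ⟨t', ⟨⟨h1, h2⟩, h3⟩, h4⟩
      · rintro ⟨t', ⟨⟨h1, h2⟩, h3⟩, h4⟩
        exact ⟨t', h1, h2, h3, h4⟩
    rw [h]
    refine MeasurableSet.iUnion fun t' => ?_
    refine (((ih t').inter (MeasurableSet.const _)).inter
      ((measurable_pi_apply t) hA)).inter ?_
    exact MeasurableSet.iInter fun j => MeasurableSet.iInter fun _ =>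
      MeasurableSet.iInter fun _ => (measurable_pi_apply j) hA.compl

lemma GV_exists (ω : ℕ → S) (hω : ω ∈ GlobFEv A) : ∀ m, ∃ t, GV A k m t ω := by
  intro m
  induction m with
  | zero =>
    obtain ⟨t0, _, ht0⟩ := hω 0
    classical
    have hex : ∃ t, ω t ∈ A := ⟨t0, ht0⟩
    exact ⟨Nat.find hex, Nat.find_spec hex, fun j hj => Nat.find_min hex hj⟩
  | succ m ih =>
    obtain ⟨t', ht'⟩ := ih
    classical
    obtain ⟨t0, ht0ge, ht0⟩ := hω (t' + k + 1)
    have hex : ∃ t, t' + k < t ∧ ω t ∈ A := ⟨t0, by omega, ht0⟩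
    refine ⟨Nat.find hex, t', ht', (Nat.find_spec hex).1, (Nat.find_spec hex).2, ?_⟩
    intro j h1 h2 hA'
    exact Nat.find_min hex h2 ⟨h1, hA'⟩

variable (B : Set S)

/-- The decreasing family of "bad" events. -/
def Bad : ℕ → Set (ℕ → S)
  | 0 => univ
  | m + 1 => {ω | ∃ t, GV A k m t ω ∧ ∀ j ≤ t + k, ω j ∉ B}

/-- extension of a finite prefix to an infinite run -/
def extend (t : ℕ) (x : Fin (t + 1) → S) : ℕ → S := fun j => x ⟨min j t, by omega⟩

lemma measurable_extend (t : ℕ) : Measurable (extend (S := S) t) :=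
  measurable_pi_lambda _ fun _ => measurable_pi_apply _

lemma extend_restr (t : ℕ) (ω : ℕ → S) (j : ℕ) (hj : j ≤ t) :
    extend t (fun i : Fin (t + 1) => ω i.1) j = ω j := by
  show ω (min j t) = ω j
  rw [min_eq_left hj]

def Cset (m t : ℕ) : Set (Fin (t + 1) → S) :=
  (extend t ⁻¹' {ω | GV A k m t ω}) ∩ ⋂ i : Fin (t + 1), (fun x => x i) ⁻¹' Bᶜ

lemma Cset_meas (hA : MeasurableSet A) (hB : MeasurableSet B) (m t : ℕ) :
    MeasurableSet (Cset A k B m t) :=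
  ((measurable_extend t) (GV_measurable A k hA m t)).inter
    (MeasurableSet.iInter fun i => (measurable_pi_apply i) hB.compl)

lemma extend_last (t : ℕ) (y : Fin (t + 1) → S) : extend t y t = y (Fin.last t) := by
  show y ⟨min t t, _⟩ = y (Fin.last t)
  congr 1
  ext
  simp

lemma Cset_last (m t : ℕ) : ∀ y ∈ Cset A k B m t, y (Fin.last t) ∈ A := by
  intro y hy
  have h := GV_mem A k m t _ hy.1
  rwa [extend_last] at h

lemma cyl_eq (m t : ℕ) :
    (fun (ω : ℕ → S) (i : Fin (t + 1)) => ω i.1) ⁻¹' (Cset A k B m t)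
      = {ω : ℕ → S | GV A k m t ω ∧ ∀ j ≤ t, ω j ∉ B} := by
  ext ω
  simp only [mem_preimage, Cset, mem_inter_iff, mem_iInter, mem_setOf_eq, mem_compl_iff]
  constructor
  · rintro ⟨h1, h2⟩
    exact ⟨GV_congr A k m t _ ω (fun j hj => extend_restr t ω j hj) h1,
      fun j hj => h2 ⟨j, by omega⟩⟩
  · rintro ⟨h1, h2⟩
    exact ⟨GV_congr A k m t ω _ (fun j hj => (extend_restr t ω j hj).symm) h1,
      fun i => h2 i.1 (by omega)⟩

lemma cyl_disjoint (m : ℕ) : Pairwise (Function.onFun Disjoint fun t : ℕ =>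
    (fun (ω : ℕ → S) (i : Fin (t + 1)) => ω i.1) ⁻¹' (Cset A k B m t)) := by
  intro t₁ t₂ hne
  refine Set.disjoint_left.mpr fun {ω} h1 h2 => ?_
  simp only [] at h1 h2
  rw [cyl_eq] at h1 h2
  exact hne (GV_unique A k m t₁ t₂ ω h1.1 h2.1)

lemma Bad_succ_eq (m : ℕ) :
    Bad A k B (m + 1) = ⋃ t : ℕ,
      ((fun (ω : ℕ → S) (i : Fin (t + 1)) => ω i.1) ⁻¹' (Cset A k B m t)
        ∩ {ω : ℕ → S | ∀ j ≤ k, ω (t + j) ∉ B}) := by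
  ext ω
  constructor
  · rintro ⟨t, h1, h2⟩
    refine mem_iUnion.mpr ⟨t, ?_⟩
    rw [cyl_eq]
    exact ⟨⟨h1, fun j hj => h2 j (by omega)⟩, fun j hj => h2 (t + j) (by omega)⟩
  · intro h
    obtain ⟨t, ht⟩ := mem_iUnion.mp h
    rw [cyl_eq] at ht
    obtain ⟨⟨h1, h2⟩, h3⟩ := ht
    refine ⟨t, h1, fun j hj => ?_⟩
    rcases le_or_gt j t with h | h
    · exact h2 j h
    · have hj' : j = t + (j - t) := by omega
      rw [hj']; exact h3 (j - t) (by omega)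

lemma union_subset_Bad (m : ℕ) :
    (⋃ t : ℕ, (fun (ω : ℕ → S) (i : Fin (t + 1)) => ω i.1) ⁻¹' (Cset A k B m t))
      ⊆ Bad A k B m := by
  cases m with
  | zero => intro ω _; trivial
  | succ m =>
    intro ω hω
    obtain ⟨t, ht⟩ := mem_iUnion.mp hω
    rw [cyl_eq] at ht
    obtain ⟨h1, h2⟩ := ht
    obtain ⟨t', ht', hlt, _, _⟩ := h1
    exact ⟨t', ht', fun j hj => h2 j (by omega)⟩

lemma Bad_bound (κ : Kernel S S) [IsMarkovKernel κ]
    (P : Measure S → Measure (ℕ → S)) (hP : IsMarkovMeasureFamily κ P)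
    (hB : MeasurableSet B) (hA : MeasurableSet A) (p : ℝ≥0∞)
    (hreach : ∀ ν : Measure S, IsProbabilityMeasure ν → ν A = 1 → p ≤ P ν (FLe k B))
    (μ : Measure S) (hμ : IsProbabilityMeasure μ) :
    ∀ m, P μ (Bad A k B m) ≤ (1 - p) ^ m := by
  intro m
  induction m with
  | zero =>
    have hprob : IsProbabilityMeasure (P μ) := (hP μ hμ).1
    have hBad : Bad A k B 0 = univ := rfl
    rw [hBad, hprob.measure_univ, pow_zero]
  | succ m ih =>
    have hCm : ∀ t, MeasurableSet (Cset A k B m t) := Cset_meas A k B hA hB m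
    calc P μ (Bad A k B (m + 1))
        ≤ ∑' t : ℕ, P μ ((fun (ω : ℕ → S) (i : Fin (t + 1)) => ω i.1) ⁻¹' (Cset A k B m t)
            ∩ {ω : ℕ → S | ∀ j ≤ k, ω (t + j) ∉ B}) := by
          rw [Bad_succ_eq]; exact measure_iUnion_le _
      _ ≤ ∑' t : ℕ, (1 - p) * P μ ((fun (ω : ℕ → S) (i : Fin (t + 1)) => ω i.1)
            ⁻¹' (Cset A k B m t)) :=
          ENNReal.tsum_le_tsum fun t => markov_step κ P hP B A hB k p hreach μ hμ t
            (Cset A k B m t) (hCm t) (Cset_last A k B m t)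
      _ = (1 - p) * ∑' t : ℕ, P μ ((fun (ω : ℕ → S) (i : Fin (t + 1)) => ω i.1)
            ⁻¹' (Cset A k B m t)) := ENNReal.tsum_mul_left
      _ = (1 - p) * P μ (⋃ t : ℕ, (fun (ω : ℕ → S) (i : Fin (t + 1)) => ω i.1)
            ⁻¹' (Cset A k B m t)) := by
          rw [measure_iUnion (cyl_disjoint A k B m)
            (fun t => (measurable_restrMap t) (hCm t))]
      _ ≤ (1 - p) * P μ (Bad A k B m) :=
          mul_le_mul_right (measure_mono (union_subset_Bad A k B m)) _
      _ ≤ (1 - p) * (1 - p) ^ m := mul_le_mul_right ih _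
      _ = (1 - p) ^ (m + 1) := by rw [pow_succ, mul_comm]

end Aux3

/-- bounded-horizon version of the key lemma. If there are `k ∈ ℕ` and
`p > 0` such that from every distribution concentrated on `A` the probability of reaching `B`
within `k` steps is at least `p`, then the set of runs that never visit `B` yet visit `A`
infinitely often is null. -/
theorem never_B_and_infinitely_often_A_null_of_boundedHorizon
    (κ : Kernel S S) [IsMarkovKernel κ]
    (P : Measure S → Measure (ℕ → S)) (hP : IsMarkovMeasureFamily κ P)
    (B A : Set S) (hB : MeasurableSet B) (hA : MeasurableSet A)
    (k : ℕ) (p : ℝ≥0∞) (hp : 0 < p)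
    (hreach : ∀ ν : Measure S, IsProbabilityMeasure ν → ν A = 1 → p ≤ P ν (FLe k B))
    (μ : Measure S) (hμ : IsProbabilityMeasure μ) :
    P μ (Glob Bᶜ ∩ GlobFEv A) = 0 := by
  have hsub : ∀ m, Glob Bᶜ ∩ GlobFEv A ⊆ Bad A k B m := by
    intro m
    cases m with
    | zero => intro ω _; trivial
    | succ m =>
      rintro ω ⟨hG, hGF⟩
      obtain ⟨t, ht⟩ := GV_exists A k ω hGF m
      exact ⟨t, ht, fun j _ => hG j⟩
  have hle : ∀ m, P μ (Glob Bᶜ ∩ GlobFEv A) ≤ (1 - p) ^ m := fun m =>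
    le_trans (measure_mono (hsub m)) (Bad_bound A k B κ P hP hB hA p hreach μ hμ m)
  have hlt1 : (1 - p : ℝ≥0∞) < 1 :=
    ENNReal.sub_lt_self ENNReal.one_ne_top one_ne_zero (ne_of_gt hp)
  have hlim : Tendsto (fun m => ((1 - p : ℝ≥0∞)) ^ m) atTop (nhds 0) :=
    ENNReal.tendsto_pow_atTop_nhds_zero_of_lt_one hlt1
  exact le_antisymm (ge_of_tendsto' hlim hle) (zero_le)

end STS
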